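/- Let v = (v_i)_{i≥0} be the sequence with values in ℤ/4ℤ where v_i is the coefficient of x^i in 2x + 2x² + (2 + 3x)·S_∞(x) + 2x·S^e_∞(x) + (x + x²)·φ(x) reduced modulo 4. Then the 2-kernel of v is finite, i.e., v is 2-automatic. (This is the automaticity part of Theorem 1.2: Stiel_r modulo 4 is 2-automatic.) -/

import Mathlib

open PowerSeries Classical

/-- The generating function of the Catalan numbers. -/
noncomputable def phi : PowerSeries ℤ := PowerSeries.mk fun n => (catalan n : ℤ)

/-- `S_∞(x) = Σ_{i ≥ 0} x^{2^i}`. -/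
noncomputable def Sinf : PowerSeries ℤ :=
  PowerSeries.mk fun n => if ∃ k : ℕ, n = 2 ^ k then 1 else 0

/-- `S^e_∞(x) = Σ_{i ≥ 0} x^{2^{2i}}`. -/
noncomputable def Seinf : PowerSeries ℤ :=
  PowerSeries.mk fun n => if ∃ k : ℕ, n = 2 ^ (2 * k) then 1 else 0

/-- The `k`-kernel of a sequence `u`. -/
def kKernel {α : Type*} (k : ℕ) (u : ℕ → α) : Set (ℕ → α) :=
  {g | ∃ e j : ℕ, j < k ^ e ∧ g = fun n => u (k ^ e * n + j)}

/-- The coefficients, reduced modulo 4, of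
`2x + 2x² + (2 + 3x)·S_∞(x) + 2x·S^e_∞(x) + (x + x²)·φ(x)`. -/
noncomputable def v (i : ℕ) : ZMod 4 :=
  ((PowerSeries.coeff i
      (2 * PowerSeries.X + 2 * PowerSeries.X ^ 2 +
        (2 + 3 * PowerSeries.X) * Sinf + 2 * PowerSeries.X * Seinf +
        (PowerSeries.X + PowerSeries.X ^ 2) * phi) : ℤ) : ZMod 4)


section Aux
lemma pow2_L1 : ∀ c a b : ℕ, 2^a + 2^b = 2^c → a = b ∧ c = a + 1 := by
  intro c
  induction c with
  | zero =>
    intro a b h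
    have ha : 1 ≤ 2^a := Nat.one_le_two_pow
    have hb : 1 ≤ 2^b := Nat.one_le_two_pow
    simp only [pow_zero, one_mul] at h; omega
  | succ c ih =>
    intro a b h
    rw [pow_succ] at h
    match a, b with
    | 0, 0 =>
      match c with
      | 0 => omega
      | c+1 =>
        have := Nat.one_lt_two_pow' c
        rw [pow_succ] at h
        simp only [pow_zero] at h
        omega
    | 0, b+1 => rw [pow_succ] at h; simp only [pow_zero, one_mul] at h; omega
    | a+1, 0 => rw [pow_succ] at h; simp only [pow_zero, one_mul] at h; omega
    | a+1, b+1 =>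
      rw [pow_succ, pow_succ] at h
      have h' : 2^a + 2^b = 2^c := by omega
      have := ih a b h'
      omega

lemma pow2_L2 : ∀ a b c d : ℕ, a < b → c < d → 2^a + 2^b = 2^c + 2^d → a = c ∧ b = d := by
  intro a
  induction a with
  | zero =>
    intro b c d hab hcd h
    match c with
    | 0 =>
      simp only [pow_zero] at h
      have hbd : (2:ℕ)^b = 2^d := by omega
      have := Nat.pow_right_injective (le_refl 2) hbd
      omega
    | c+1 =>
      exfalso
      obtain ⟨b', rfl⟩ : ∃ b', b = b' + 1 := ⟨b - 1, by omega⟩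
      obtain ⟨d', rfl⟩ : ∃ d', d = d' + 1 := ⟨d - 1, by omega⟩
      rw [pow_succ, pow_succ, pow_succ] at h
      simp only [pow_zero, one_mul] at h; omega
  | succ a ih =>
    intro b c d hab hcd h
    obtain ⟨b', rfl⟩ : ∃ b', b = b' + 1 := ⟨b - 1, by omega⟩
    match c with
    | 0 =>
      exfalso
      obtain ⟨d', rfl⟩ : ∃ d', d = d' + 1 := ⟨d - 1, by omega⟩
      rw [pow_succ, pow_succ, pow_succ] at h
      simp only [pow_zero, one_mul] at h; omega
    | c+1 =>
      obtain ⟨d', rfl⟩ : ∃ d', d = d' + 1 := ⟨d - 1, by omega⟩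
      rw [pow_succ, pow_succ, pow_succ, pow_succ] at h
      have h' : 2^a + 2^b' = 2^c + 2^d' := by omega
      have := ih b' c d' (by omega) (by omega) h'
      omega

lemma pow2_L3 {a b c : ℕ} (hab : a < b) (h : 2^a + 2^b = 2^c) : False := by
  have := pow2_L1 c a b h; omega

/-- Catalan numbers mod 4. -/
noncomputable def W (n : ℕ) : ZMod 4 :=
  if ∃ k, n + 1 = 2^k then 1 else if ∃ a b, a < b ∧ n + 1 = 2^a + 2^b then 2 else 0

noncomputable def wA (n : ℕ) : ZMod 4 := if ∃ k, n + 1 = 2^k then 1 else 0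
noncomputable def wB (n : ℕ) : ZMod 4 := if ∃ a b, a < b ∧ n + 1 = 2^a + 2^b then 1 else 0

lemma W_eq (n : ℕ) : W n = wA n + 2 * wB n := by
  unfold W wA wB
  by_cases h1 : ∃ k, n + 1 = 2^k
  · have h2 : ¬ ∃ a b, a < b ∧ n + 1 = 2^a + 2^b := by
      rintro ⟨a, b, hab, hh⟩
      obtain ⟨k, hk⟩ := h1
      exact pow2_L3 hab (show 2^a+2^b = 2^k by omega)
    simp [h1, h2]
  · by_cases h2 : ∃ a b, a < b ∧ n + 1 = 2^a + 2^b <;> simp [h1, h2]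

lemma mul_boole_boole (p q : Prop) :
    (if p then (1 : ZMod 4) else 0) * (if q then (1 : ZMod 4) else 0)
      = if p ∧ q then 1 else 0 := by
  by_cases hp : p <;> by_cases hq : q <;> simp [hp, hq]

lemma cat4 : ∀ n, (catalan n : ZMod 4) = W n := by
  intro n
  induction n using Nat.strong_induction_on with
  | _ n ih =>
    match n with
    | 0 =>
      have : W 0 = 1 := by unfold W; rw [if_pos ⟨0, rfl⟩]
      rw [this]; simp
    | n + 1 =>
      have hs : catalan (n+1) = ∑ i ∈ Finset.range (n+1), catalan i * catalan (n - i) := by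
        rw [catalan_succ]
        exact Fin.sum_univ_eq_sum_range (fun i => catalan i * catalan (n - i)) (n+1)
      rw [hs]
      push_cast
      have h1 : ∀ i ∈ Finset.range (n+1),
          (catalan i : ZMod 4) * (catalan (n - i) : ZMod 4)
            = wA i * wA (n-i) + 2 * (wA i * wB (n-i)) + 2 * (wB i * wA (n-i)) := by
        intro i hi
        rw [Finset.mem_range] at hi
        rw [ih i (by omega), ih (n-i) (by omega), W_eq, W_eq]
        have : ∀ p q r s : ZMod 4,
            (p + 2*q) * (r + 2*s) = p*r + 2*(p*s) + 2*(q*r) := by decide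
        exact this _ _ _ _
      rw [Finset.sum_congr rfl h1]
      rw [Finset.sum_add_distrib, Finset.sum_add_distrib, ← Finset.mul_sum, ← Finset.mul_sum]
      have hrefl : ∑ i ∈ Finset.range (n+1), wB i * wA (n-i)
          = ∑ i ∈ Finset.range (n+1), wA i * wB (n-i) := by
        rw [← Finset.sum_range_reflect]
        apply Finset.sum_congr rfl
        intro i hi
        rw [Finset.mem_range] at hi
        have h1 : n + 1 - 1 - i = n - i := by omega
        have h2 : n - (n - i) = i := by omega
        rw [h1, h2, mul_comm]
      rw [hrefl]
      have hkill : ∀ s : ZMod 4, 2 * s + 2 * s = 0 := by decide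
      rw [add_assoc, hkill, add_zero]
      -- now  ∑ wA i * wA (n-i) = W (n+1)
      have h2 : ∀ i ∈ Finset.range (n+1),
          wA i * wA (n-i) = if (∃ k, i + 1 = 2^k) ∧ (∃ l, (n-i) + 1 = 2^l) then (1 : ZMod 4) else 0 := by
        intro i _; unfold wA; exact mul_boole_boole _ _
      rw [Finset.sum_congr rfl h2, Finset.sum_boole]
      -- card computation
      set P : ℕ → Prop := fun i => (∃ k, i + 1 = 2^k) ∧ (∃ l, (n-i) + 1 = 2^l) with hP
      by_cases hA : ∃ c, n + 2 = 2^c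
      · obtain ⟨c, hc⟩ := hA
        match c with
        | 0 => simp at hc
        | c + 1 =>
          have hpow : (2:ℕ)^(c+1) = 2^c * 2 := pow_succ 2 c
          have hone : 1 ≤ (2:ℕ)^c := Nat.one_le_two_pow
          have hfilter : (Finset.range (n+1)).filter P = {2^c - 1} := by
            ext i
            simp only [Finset.mem_filter, Finset.mem_range, Finset.mem_singleton, hP]
            constructor
            · rintro ⟨hi, ⟨k, hk⟩, ⟨l, hl⟩⟩
              have hsum : (2:ℕ)^k + 2^l = 2^(c+1) := by omega
              obtain ⟨hkl, hck⟩ := pow2_L1 (c+1) k l hsum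
              subst hkl
              have hkc : k = c := by omega
              subst hkc; omega
            · rintro rfl
              refine ⟨by omega, ⟨c, by omega⟩, ⟨c, by omega⟩⟩
          rw [hfilter]
          have hW : W (n+1) = 1 := by
            unfold W; rw [if_pos ⟨c+1, by omega⟩]
          rw [hW]; simp
      · by_cases hB : ∃ a b, a < b ∧ n + 2 = 2^a + 2^b
        · obtain ⟨a, b, hab, hsum⟩ := hB
          have hone_a : 1 ≤ (2:ℕ)^a := Nat.one_le_two_pow
          have hlt : (2:ℕ)^a < 2^b := Nat.pow_lt_pow_right (by norm_num) hab
          have hfilter : (Finset.range (n+1)).filter P = {2^a - 1, 2^b - 1} := by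
            ext i
            simp only [Finset.mem_filter, Finset.mem_range, Finset.mem_insert,
              Finset.mem_singleton, hP]
            constructor
            · rintro ⟨hi, ⟨k, hk⟩, ⟨l, hl⟩⟩
              have hsum2 : (2:ℕ)^k + 2^l = 2^a + 2^b := by omega
              rcases lt_trichotomy k l with h | h | h
              · obtain ⟨h1', h2'⟩ := pow2_L2 k l a b h hab hsum2
                subst h1'; subst h2'; left; omega
              · exfalso; subst h
                have : (2:ℕ)^k + 2^k = 2^(k+1) := by rw [pow_succ]; ring
                exact hA ⟨k+1, by omega⟩
              · obtain ⟨h1', h2'⟩ := pow2_L2 l k a b h hab (show 2^l + 2^k = 2^a + 2^b by omega)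
                subst h1'; subst h2'; right; omega
            · rintro (rfl | rfl)
              · exact ⟨by omega, ⟨a, by omega⟩, ⟨b, by omega⟩⟩
              · exact ⟨by omega, ⟨b, by omega⟩, ⟨a, by omega⟩⟩
          rw [hfilter]
          have hW : W (n+1) = 2 := by
            unfold W
            rw [if_neg (by rintro ⟨k, hk⟩; exact hA ⟨k, by omega⟩),
              if_pos ⟨a, b, hab, by omega⟩]
          rw [hW]
          rw [Finset.card_insert_of_notMem (by simp; omega), Finset.card_singleton]
          decide
        · have hfilter : (Finset.range (n+1)).filter P = ∅ := by
            ext i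
            simp only [Finset.mem_filter, Finset.mem_range, Finset.notMem_empty,
              iff_false, hP]
            rintro ⟨hi, ⟨k, hk⟩, ⟨l, hl⟩⟩
            have hsum2 : (2:ℕ)^k + 2^l = n + 2 := by omega
            rcases lt_trichotomy k l with h | h | h
            · exact hB ⟨k, l, h, by omega⟩
            · subst h
              have : (2:ℕ)^k + 2^k = 2^(k+1) := by rw [pow_succ]; ring
              exact hA ⟨k+1, by omega⟩
            · exact hB ⟨l, k, h, by omega⟩
          rw [hfilter]
          have hW : W (n+1) = 0 := by
            unfold W
            rw [if_neg (by rintro ⟨k, hk⟩; exact hA ⟨k, by omega⟩),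
              if_neg (by rintro ⟨a, b, hab, hh⟩; exact hB ⟨a, b, hab, by omega⟩)]
          rw [hW]; simp

noncomputable def bE0 (n : ℕ) : ZMod 4 := if n = 0 then 1 else 0
noncomputable def bE1 (n : ℕ) : ZMod 4 := if n = 1 then 1 else 0
noncomputable def bE2 (n : ℕ) : ZMod 4 := if n = 2 then 1 else 0
noncomputable def bA (n : ℕ) : ZMod 4 := if ∃ k, n = 2^k then 1 else 0
noncomputable def bSA (n : ℕ) : ZMod 4 := if ∃ k, n = 2^k + 1 then 1 else 0
noncomputable def bB (n : ℕ) : ZMod 4 := if ∃ a b, a < b ∧ n = 2^a + 2^b then 1 else 0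
noncomputable def bCc (n : ℕ) : ZMod 4 := if ∃ a b, a < b ∧ n = 2^a + 2^b + 1 then 1 else 0
noncomputable def bQ (n : ℕ) : ZMod 4 := if ∃ k, n = 2^(2*k) then 1 else 0
noncomputable def bOP (n : ℕ) : ZMod 4 := if ∃ k, n = 2^(2*k+1) then 1 else 0
noncomputable def bSQ (n : ℕ) : ZMod 4 := if ∃ k, n = 2^(2*k) + 1 then 1 else 0

lemma ite1_congr {p q : Prop} [Decidable p] [Decidable q] (h : p ↔ q) : (if p then (1 : ZMod 4) else 0) = if q then 1 else 0 :=
  if_congr h rfl rfl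

lemma ite1_neg {p : Prop} [Decidable p] (h : ¬ p) : (if p then (1 : ZMod 4) else 0) = 0 := if_neg h

-- decimation lemmas
lemma bE0_even (n : ℕ) : bE0 (2*n) = bE0 n := by unfold bE0; exact ite1_congr (by omega)
lemma bE0_odd (n : ℕ) : bE0 (2*n+1) = 0 := by unfold bE0; exact ite1_neg (by omega)
lemma bE1_even (n : ℕ) : bE1 (2*n) = 0 := by unfold bE1; exact ite1_neg (by omega)
lemma bE1_odd (n : ℕ) : bE1 (2*n+1) = bE0 n := by unfold bE1 bE0; exact ite1_congr (by omega)
lemma bE2_even (n : ℕ) : bE2 (2*n) = bE1 n := by unfold bE2 bE1; exact ite1_congr (by omega)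
lemma bE2_odd (n : ℕ) : bE2 (2*n+1) = 0 := by unfold bE2; exact ite1_neg (by omega)

lemma bA_even (n : ℕ) : bA (2*n) = bA n := by
  unfold bA
  apply ite1_congr
  constructor
  · rintro ⟨k, hk⟩
    match k with
    | 0 => simp only [Nat.mul_zero, pow_zero] at hk; omega
    | k+1 => rw [pow_succ] at hk; exact ⟨k, by omega⟩
  · rintro ⟨k, rfl⟩; exact ⟨k+1, by rw [pow_succ]; ring⟩

lemma bA_odd (n : ℕ) : bA (2*n+1) = bE0 n := by
  unfold bA bE0
  apply ite1_congr
  constructor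
  · rintro ⟨k, hk⟩
    match k with
    | 0 => simp only [Nat.mul_zero, pow_zero] at hk; omega
    | k+1 => rw [pow_succ] at hk; omega
  · intro h; exact ⟨0, by omega⟩

lemma bSA_even (n : ℕ) : bSA (2*n) = bE1 n := by
  unfold bSA bE1
  apply ite1_congr
  constructor
  · rintro ⟨k, hk⟩
    match k with
    | 0 => simp only [Nat.mul_zero, pow_zero] at hk; omega
    | k+1 => rw [pow_succ] at hk; omega
  · intro h; exact ⟨0, by omega⟩

lemma bSA_odd (n : ℕ) : bSA (2*n+1) = bA n := by
  unfold bSA bA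
  apply ite1_congr
  constructor
  · rintro ⟨k, hk⟩
    match k with
    | 0 => simp only [Nat.mul_zero, pow_zero] at hk; omega
    | k+1 => rw [pow_succ] at hk; exact ⟨k, by omega⟩
  · rintro ⟨k, rfl⟩; exact ⟨k+1, by rw [pow_succ]; omega⟩

lemma bB_even (n : ℕ) : bB (2*n) = bB n := by
  unfold bB
  apply ite1_congr
  constructor
  · rintro ⟨a, b, hab, h⟩
    match a, b with
    | 0, b+1 => rw [pow_succ] at h; simp only [pow_zero] at h; omega
    | a+1, b+1 =>
      rw [pow_succ, pow_succ] at h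
      exact ⟨a, b, by omega, by omega⟩
  · rintro ⟨a, b, hab, rfl⟩
    exact ⟨a+1, b+1, by omega, by rw [pow_succ, pow_succ]; ring⟩

lemma bB_odd (n : ℕ) : bB (2*n+1) = bA n := by
  unfold bB bA
  apply ite1_congr
  constructor
  · rintro ⟨a, b, hab, h⟩
    match a, b with
    | 0, b+1 => rw [pow_succ] at h; simp only [pow_zero] at h; exact ⟨b, by omega⟩
    | a+1, b+1 => rw [pow_succ, pow_succ] at h; omega
  · rintro ⟨k, rfl⟩
    exact ⟨0, k+1, by omega, by rw [pow_zero, pow_succ]; omega⟩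

lemma bCc_even (n : ℕ) : bCc (2*n) = bSA n := by
  unfold bCc bSA
  apply ite1_congr
  constructor
  · rintro ⟨a, b, hab, h⟩
    match a, b with
    | 0, b+1 => rw [pow_succ] at h; simp only [pow_zero] at h; exact ⟨b, by omega⟩
    | a+1, b+1 => rw [pow_succ, pow_succ] at h; omega
  · rintro ⟨k, rfl⟩
    exact ⟨0, k+1, by omega, by rw [pow_zero, pow_succ]; omega⟩

lemma bCc_odd (n : ℕ) : bCc (2*n+1) = bB n := by
  unfold bCc bB
  apply ite1_congr
  constructor
  · rintro ⟨a, b, hab, h⟩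
    match a, b with
    | 0, b+1 => rw [pow_succ] at h; simp only [pow_zero] at h; omega
    | a+1, b+1 =>
      rw [pow_succ, pow_succ] at h
      exact ⟨a, b, by omega, by omega⟩
  · rintro ⟨a, b, hab, rfl⟩
    exact ⟨a+1, b+1, by omega, by rw [pow_succ, pow_succ]; omega⟩

lemma bQ_even (n : ℕ) : bQ (2*n) = bOP n := by
  unfold bQ bOP
  apply ite1_congr
  constructor
  · rintro ⟨k, hk⟩
    match k with
    | 0 => simp only [Nat.mul_zero, pow_zero] at hk; omega
    | k+1 =>
      have h : 2*(k+1) = (2*k+1)+1 := by omega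
      rw [h, pow_succ] at hk
      exact ⟨k, by omega⟩
  · rintro ⟨k, rfl⟩
    refine ⟨k+1, ?_⟩
    have h : 2*(k+1) = (2*k+1)+1 := by omega
    rw [h, pow_succ]; ring

lemma bQ_odd (n : ℕ) : bQ (2*n+1) = bE0 n := by
  unfold bQ bE0
  apply ite1_congr
  constructor
  · rintro ⟨k, hk⟩
    match k with
    | 0 => simp only [Nat.mul_zero, pow_zero] at hk; omega
    | k+1 =>
      have h : 2*(k+1) = (2*k+1)+1 := by omega
      rw [h, pow_succ] at hk; omega
  · intro h; exact ⟨0, by omega⟩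

lemma bOP_even (n : ℕ) : bOP (2*n) = bQ n := by
  unfold bOP bQ
  apply ite1_congr
  constructor
  · rintro ⟨k, hk⟩
    rw [pow_succ] at hk
    exact ⟨k, by omega⟩
  · rintro ⟨k, rfl⟩; exact ⟨k, by rw [pow_succ]; ring⟩

lemma bOP_odd (n : ℕ) : bOP (2*n+1) = 0 := by
  unfold bOP
  apply ite1_neg
  rintro ⟨k, hk⟩
  rw [pow_succ] at hk; omega

lemma bSQ_even (n : ℕ) : bSQ (2*n) = bE1 n := by
  unfold bSQ bE1
  apply ite1_congr
  constructor
  · rintro ⟨k, hk⟩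
    match k with
    | 0 => simp only [Nat.mul_zero, pow_zero] at hk; omega
    | k+1 =>
      have h : 2*(k+1) = (2*k+1)+1 := by omega
      rw [h, pow_succ] at hk; omega
  · intro h; exact ⟨0, by omega⟩

lemma bSQ_odd (n : ℕ) : bSQ (2*n+1) = bOP n := by
  unfold bSQ bOP
  apply ite1_congr
  constructor
  · rintro ⟨k, hk⟩
    match k with
    | 0 => simp only [Nat.mul_zero, pow_zero] at hk; omega
    | k+1 =>
      have h : 2*(k+1) = (2*k+1)+1 := by omega
      rw [h, pow_succ] at hk
      exact ⟨k, by omega⟩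
  · rintro ⟨k, rfl⟩
    refine ⟨k+1, ?_⟩
    have h : 2*(k+1) = (2*k+1)+1 := by omega
    rw [h, pow_succ]; omega

lemma coeff_X_mul' (f : PowerSeries ℤ) (i : ℕ) :
    coeff i (X * f) = if 1 ≤ i then coeff (i-1) f else 0 := by
  cases i with
  | zero =>
    rw [if_neg (by omega)]
    simp [coeff_zero_eq_constantCoeff, map_mul]
  | succ n =>
    rw [coeff_succ_X_mul, if_pos (by omega)]
    simp

lemma two_C : (2 : PowerSeries ℤ) = C 2 := by simp
lemma three_C : (3 : PowerSeries ℤ) = C 3 := by simp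

lemma coeffStmt (i : ℕ) :
    coeff i (2 * X + 2 * X ^ 2 + (2 + 3 * X) * Sinf + 2 * X * Seinf + (X + X ^ 2) * phi)
      = (if i = 1 then 2 else 0) + (if i = 2 then 2 else 0)
        + 2 * (if ∃ k : ℕ, i = 2^k then 1 else 0)
        + 3 * (if 1 ≤ i then (if ∃ k : ℕ, i - 1 = 2^k then 1 else 0) else 0)
        + 2 * (if 1 ≤ i then (if ∃ k : ℕ, i - 1 = 2^(2*k) then 1 else 0) else 0)
        + (if 1 ≤ i then (catalan (i-1) : ℤ) else 0)
        + (if 2 ≤ i then (catalan (i-2) : ℤ) else 0) := by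
  have e1 : (2 + 3 * X) * Sinf = C 2 * Sinf + C 3 * (X * Sinf) := by
    rw [← two_C, ← three_C]; ring
  have e2 : 2 * X * Seinf = C 2 * (X * Seinf) := by rw [← two_C]; ring
  have e3 : (X + X ^ 2) * phi = X * phi + X * (X * phi) := by ring
  have e4 : (2 : PowerSeries ℤ) * X = C 2 * X := by rw [← two_C]
  have e5 : (2 : PowerSeries ℤ) * X ^ 2 = C 2 * X ^ 2 := by rw [← two_C]
  rw [e1, e2, e3, e4, e5]
  simp only [map_add, coeff_C_mul, coeff_X, coeff_X_pow, coeff_X_mul']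
  simp only [Sinf, Seinf, phi, coeff_mk]
  by_cases h1 : 1 ≤ i
  · by_cases h2 : 2 ≤ i
    · rw [if_pos h1, if_pos h2, if_pos h1, if_pos h1, if_pos h1, if_pos (by omega : 1 ≤ i - 1)]
      have : i - 1 - 1 = i - 2 := by omega
      rw [this]
      have hi1 : (if i = 1 then (2:ℤ) else 0) = 2 * (if i = 1 then 1 else 0) := by
        split <;> ring
      have hi2 : (if i = 2 then (2:ℤ) else 0) = 2 * (if i = 2 then 1 else 0) := by
        split <;> ring
      split <;> split <;> ring
    · have hi : i = 1 := by omega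
      subst hi
      norm_num
      ring
  · have hi : i = 0 := by omega
    subst hi
    norm_num

lemma W_pred {i : ℕ} (h : 1 ≤ i) :
    W (i-1) = if ∃ k, i = 2^k then 1 else if ∃ a b, a < b ∧ i = 2^a + 2^b then 2 else 0 := by
  unfold W
  have h1 : (∃ k, i - 1 + 1 = 2^k) ↔ ∃ k, i = 2^k := by
    constructor <;> rintro ⟨k, hk⟩ <;> exact ⟨k, by omega⟩
  have h2 : (∃ a b, a < b ∧ i - 1 + 1 = 2^a + 2^b) ↔ ∃ a b, a < b ∧ i = 2^a + 2^b := by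
    constructor <;> rintro ⟨a, b, hab, hk⟩ <;> exact ⟨a, b, hab, by omega⟩
  rw [if_congr h1 rfl (if_congr h2 rfl rfl)]

lemma W_pred2 {i : ℕ} (h : 2 ≤ i) :
    W (i-2) = if ∃ k, i = 2^k + 1 then 1
      else if ∃ a b, a < b ∧ i = 2^a + 2^b + 1 then 2 else 0 := by
  unfold W
  have h1 : (∃ k, i - 2 + 1 = 2^k) ↔ ∃ k, i = 2^k + 1 := by
    constructor <;> rintro ⟨k, hk⟩ <;> exact ⟨k, by omega⟩
  have h2 : (∃ a b, a < b ∧ i - 2 + 1 = 2^a + 2^b) ↔ ∃ a b, a < b ∧ i = 2^a + 2^b + 1 := by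
    constructor <;> rintro ⟨a, b, hab, hk⟩ <;> exact ⟨a, b, hab, by omega⟩
  rw [if_congr h1 rfl (if_congr h2 rfl rfl)]

lemma v_eq (i : ℕ) :
    v i = 3 * bA i + 2 * bB i + 2 * bSQ i + 2 * bCc i + 2 * bE1 i + 2 * bE2 i := by
  unfold v
  rw [coeffStmt i]
  push_cast [apply_ite (fun z : ℤ => (z : ZMod 4))]
  rw [cat4, cat4]
  unfold bA bB bSQ bCc bE1 bE2
  rcases Nat.lt_or_ge i 3 with hi | hi
  · have hnA0 : ¬ ∃ k : ℕ, 0 = 2^k := by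
      rintro ⟨k, hk⟩; have := Nat.one_le_two_pow (n := k); omega
    have hnQ0 : ¬ ∃ k : ℕ, 0 = 2^(2*k) := by
      rintro ⟨k, hk⟩; have := Nat.one_le_two_pow (n := 2*k); omega
    have hB1 : ∀ m : ℕ, m < 3 → ¬ ∃ a b : ℕ, a < b ∧ m = 2^a + 2^b := by
      rintro m hm ⟨a, b, hab, hk⟩
      have := Nat.one_le_two_pow (n := a)
      have h2b : (2:ℕ) ≤ 2^b := by
        calc (2:ℕ) = 2^1 := rfl
        _ ≤ 2^b := Nat.pow_le_pow_right (by omega) (by omega)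
      omega
    have hCc1 : ∀ m : ℕ, m < 3 → ¬ ∃ a b : ℕ, a < b ∧ m = 2^a + 2^b + 1 := by
      rintro m hm ⟨a, b, hab, hk⟩
      have := Nat.one_le_two_pow (n := a)
      have h2b : (2:ℕ) ≤ 2^b := by
        calc (2:ℕ) = 2^1 := rfl
        _ ≤ 2^b := Nat.pow_le_pow_right (by omega) (by omega)
      omega
    have hW0 : W 0 = 1 := by unfold W; rw [if_pos ⟨0, by norm_num⟩]
    have hW1 : W 1 = 1 := by unfold W; rw [if_pos ⟨1, by norm_num⟩]
    interval_cases i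
    · have hSQ : ¬ ∃ k : ℕ, 0 = 2^(2*k) + 1 := by
        rintro ⟨k, hk⟩; have := Nat.one_le_two_pow (n := 2*k); omega
      simp [hnA0, hB1 0 (by omega), hSQ, hCc1 0 (by omega)]
    · have hA1 : ∃ k : ℕ, 1 = 2^k := ⟨0, by norm_num⟩
      have hSQ : ¬ ∃ k : ℕ, 1 = 2^(2*k) + 1 := by
        rintro ⟨k, hk⟩; have := Nat.one_le_two_pow (n := 2*k); omega
      simp [hnA0, hnQ0, hA1, hW0, hB1 1 (by omega), hSQ, hCc1 1 (by omega)]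
      decide
    · have hA2 : ∃ k : ℕ, 2 = 2^k := ⟨1, by norm_num⟩
      have hA1 : ∃ k : ℕ, 1 = 2^k := ⟨0, by norm_num⟩
      have hQ1 : ∃ k : ℕ, 1 = 2^(2*k) := ⟨0, by norm_num⟩
      have hSQ : ∃ k : ℕ, 2 = 2^(2*k) + 1 := ⟨0, by norm_num⟩
      have hQ1' : ∃ k : ℕ, 2^(2*k) = 1 := ⟨0, by norm_num⟩
      have hB1' : ¬ ∃ a b : ℕ, a < b ∧ 2^a + 2^b = 1 := by
        rintro ⟨a, b, hab, hk⟩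
        have := Nat.one_le_two_pow (n := a)
        have h2b : (2:ℕ) ≤ 2^b := by
          calc (2:ℕ) = 2^1 := rfl
          _ ≤ 2^b := Nat.pow_le_pow_right (by omega) (by omega)
        omega
      have hA1' : ∃ k : ℕ, 2^k = 1 := ⟨0, by norm_num⟩
      simp [hA2, hA1, hQ1, hW1, hW0, hB1 2 (by omega), hSQ, hCc1 2 (by omega), hQ1', hB1', hA1']
      try decide
  · -- i ≥ 3
    rw [if_neg (by omega : ¬ i = 1), if_neg (by omega : ¬ i = 2),
      if_pos (by omega : 1 ≤ i), if_pos (by omega : 1 ≤ i),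
      if_pos (by omega : 1 ≤ i), if_pos (by omega : 2 ≤ i),
      W_pred (by omega), W_pred2 (by omega),
      if_neg (by omega : ¬ i = 1), if_neg (by omega : ¬ i = 2)]
    have hpredA : (∃ k : ℕ, i - 1 = 2^k) ↔ ∃ k : ℕ, i = 2^k + 1 := by
      constructor <;> rintro ⟨k, hk⟩ <;> exact ⟨k, by omega⟩
    have hpredQ : (∃ k : ℕ, i - 1 = 2^(2*k)) ↔ ∃ k : ℕ, i = 2^(2*k) + 1 := by
      constructor <;> rintro ⟨k, hk⟩ <;> exact ⟨k, by omega⟩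
    rw [if_congr hpredA rfl rfl, if_congr hpredQ rfl rfl]
    by_cases hPA : ∃ k : ℕ, i = 2^k <;>
    by_cases hPSA : ∃ k : ℕ, i = 2^k + 1 <;>
    by_cases hPSQ : ∃ k : ℕ, i = 2^(2*k) + 1 <;>
    by_cases hPB : ∃ a b : ℕ, a < b ∧ i = 2^a + 2^b <;>
    by_cases hPCc : ∃ a b : ℕ, a < b ∧ i = 2^a + 2^b + 1 <;>
    simp only [hPA, hPSA, hPSQ, hPB, hPCc, if_true, if_false, ite_true, ite_false] <;>
    first
      | decide
      | (exfalso; obtain ⟨a, b, hab, hk⟩ := hPB; obtain ⟨k, hkk⟩ := hPA;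
         exact pow2_L3 hab (show 2^a + 2^b = 2^k by omega))
      | (exfalso; obtain ⟨a, b, hab, hk⟩ := hPCc; obtain ⟨k, hkk⟩ := hPSA;
         exact pow2_L3 hab (show 2^a + 2^b = 2^k by omega))
      | (exfalso; obtain ⟨k, hk⟩ := hPSQ; exact hPSA ⟨2*k, hk⟩)

noncomputable def combo (c₀ c₁ c₂ c₃ c₄ c₅ c₆ c₇ c₈ c₉ : ZMod 4) (n : ℕ) : ZMod 4 :=
  c₀ * bE0 n + c₁ * bE1 n + c₂ * bE2 n + c₃ * bA n + c₄ * bSA n +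
    c₅ * bB n + c₆ * bCc n + c₇ * bQ n + c₈ * bOP n + c₉ * bSQ n

abbrev Tup := ZMod 4 × ZMod 4 × ZMod 4 × ZMod 4 × ZMod 4 × ZMod 4 × ZMod 4 × ZMod 4 ×
  ZMod 4 × ZMod 4

noncomputable def pk (c : Tup) : ℕ → ZMod 4 :=
  combo c.1 c.2.1 c.2.2.1 c.2.2.2.1 c.2.2.2.2.1 c.2.2.2.2.2.1 c.2.2.2.2.2.2.1
    c.2.2.2.2.2.2.2.1 c.2.2.2.2.2.2.2.2.1 c.2.2.2.2.2.2.2.2.2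

lemma combo_even (c₀ c₁ c₂ c₃ c₄ c₅ c₆ c₇ c₈ c₉ : ZMod 4) :
    (fun n => combo c₀ c₁ c₂ c₃ c₄ c₅ c₆ c₇ c₈ c₉ (2*n))
      = combo c₀ (c₂ + c₄ + c₉) 0 c₃ c₆ c₅ 0 c₈ c₇ 0 := by
  funext n
  simp only [combo, bE0_even, bE1_even, bE2_even, bA_even, bSA_even, bB_even,
    bCc_even, bQ_even, bOP_even, bSQ_even]
  ring

lemma combo_odd (c₀ c₁ c₂ c₃ c₄ c₅ c₆ c₇ c₈ c₉ : ZMod 4) :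
    (fun n => combo c₀ c₁ c₂ c₃ c₄ c₅ c₆ c₇ c₈ c₉ (2*n+1))
      = combo (c₁ + c₃ + c₇) 0 0 (c₄ + c₅) 0 c₆ 0 0 c₉ 0 := by
  funext n
  simp only [combo, bE0_odd, bE1_odd, bE2_odd, bA_odd, bSA_odd, bB_odd,
    bCc_odd, bQ_odd, bOP_odd, bSQ_odd]
  ring

lemma v_combo : v = combo 0 2 2 3 0 2 2 0 0 2 := by
  funext n
  rw [v_eq n]
  simp only [combo]
  ring


end Aux

/-- (Theorem 1.2, automaticity part.) `Stiel_r` modulo 4 is 2-automatic: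
its 2-kernel is finite. -/
theorem stmt3 : (kKernel 2 v).Finite := by
  apply Set.Finite.subset (Set.finite_range pk)
  have key : ∀ e j : ℕ, j < 2^e → (fun n => v (2^e * n + j)) ∈ Set.range pk := by
    intro e
    induction e with
    | zero =>
      intro j hj
      have hj0 : j = 0 := by omega
      subst hj0
      refine ⟨(0, 2, 2, 3, 0, 2, 2, 0, 0, 2), ?_⟩
      funext n
      show pk (0, 2, 2, 3, 0, 2, 2, 0, 0, 2) n = v (2^0 * n + 0)
      rw [v_combo]
      norm_num [pk]
    | succ e ih =>
      intro j hj
      obtain ⟨b, j', hb, hj', hdecomp⟩ :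
          ∃ b j' : ℕ, (b = 0 ∨ b = 1) ∧ j' < 2^e ∧ j = 2^e * b + j' := by
        refine ⟨j / 2^e, j % 2^e, ?_, ?_, (Nat.div_add_mod j (2^e)).symm⟩
        · have h1 : 1 ≤ (2:ℕ)^e := Nat.one_le_two_pow
          have h2 : (2:ℕ)^(e+1) = 2^e * 2 := pow_succ 2 e
          have : j / 2^e < 2 := Nat.div_lt_of_lt_mul (by omega)
          revert this
          generalize j / 2^e = d
          omega
        · exact Nat.mod_lt _ (by positivity)
      subst hdecomp
      obtain ⟨c, hc⟩ := ih j' hj'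
      have harg : ∀ n, 2^(e+1) * n + (2^e * b + j') = 2^e * (2*n+b) + j' := by
        intro n; rw [pow_succ]; ring
      have heq : (fun n => v (2^(e+1) * n + (2^e * b + j')))
          = fun n => pk c (2*n+b) := by
        funext n
        rw [harg n, hc]
      rw [heq]
      obtain ⟨c₀, c₁, c₂, c₃, c₄, c₅, c₆, c₇, c₈, c₉⟩ := c
      rcases hb with rfl | rfl
      · refine ⟨(c₀, c₂ + c₄ + c₉, 0, c₃, c₆, c₅, 0, c₈, c₇, 0), ?_⟩
        have h0 : (fun n => pk (c₀, c₁, c₂, c₃, c₄, c₅, c₆, c₇, c₈, c₉) (2*n+0))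
            = (fun n => combo c₀ c₁ c₂ c₃ c₄ c₅ c₆ c₇ c₈ c₉ (2*n)) := by
          funext n; rw [add_zero]; rfl
        rw [h0, combo_even]
        rfl
      · refine ⟨(c₁ + c₃ + c₇, 0, 0, c₄ + c₅, 0, c₆, 0, 0, c₉, 0), ?_⟩
        have h1 : (fun n => pk (c₀, c₁, c₂, c₃, c₄, c₅, c₆, c₇, c₈, c₉) (2*n+1))
            = (fun n => combo c₀ c₁ c₂ c₃ c₄ c₅ c₆ c₇ c₈ c₉ (2*n+1)) := by
          funext n; rfl
        rw [h1, combo_odd]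
        rfl
  rintro g ⟨e, j, hj, rfl⟩
  exact key e j hj
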